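/- Let g > 0. There exists a constant C > 0 such that for every integer q ≥ 2 and every k₂ ∈ [1/2 − 1/(2q), 1/2 + 1/(2q)]: all the terms φ(k₂ + l/q, E), l = 0,…,q−1, are well defined for E ∈ [1 − cos 2πk₂, 2], and 0 ≤ Φ_q(k₂, 2) − Φ_q(k₂, 1 − cos 2πk₂) ≤ C (log q)/q. (This is the key estimate showing that for large q there is at most one surface energy band below the edge E = 2 of the volume spectrum.) -/

import Mathlib

open Real Finset

lemma my_arctan_sub_le {a b : ℝ} (h : b ≤ a) : Real.arctan a - Real.arctan b ≤ a - b := by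
  have hm : Monotone (fun x : ℝ => x - Real.arctan x) := by
    apply monotone_of_deriv_nonneg
    · exact differentiable_id.sub Real.differentiable_arctan
    · intro x
      have hd : deriv (fun x : ℝ => x - Real.arctan x) x = 1 - 1 / (1 + x ^ 2) := by
        rw [deriv_fun_sub (f := fun x : ℝ => x) differentiableAt_id (Real.differentiable_arctan x)]
        simp [Real.deriv_arctan]
      rw [hd]
      have h1 : 1 / (1 + x ^ 2) ≤ 1 := by
        rw [div_le_one (by positivity)]; nlinarith [sq_nonneg x]
      linarith
  have := hm h
  simp only at this
  linarith

lemma my_sqrt_sub_le {x y : ℝ} (hx : 0 < x) (hxy : y ≤ x) :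
    Real.sqrt x - Real.sqrt y ≤ (x - y) / Real.sqrt x := by
  have hsx : 0 < Real.sqrt x := Real.sqrt_pos.mpr hx
  have hxx : Real.sqrt x * Real.sqrt x = x := Real.mul_self_sqrt hx.le
  have key : y ≤ Real.sqrt x * Real.sqrt y := by
    rcases le_or_gt y 0 with hy | hy
    · exact hy.trans (by positivity)
    · have hyy : Real.sqrt y * Real.sqrt y = y := Real.mul_self_sqrt hy.le
      nlinarith [Real.sqrt_le_sqrt hxy, Real.sqrt_nonneg y]
  rw [le_div_iff₀ hsx]
  nlinarith

lemma my_sin_ge {s : ℝ} (h0 : 0 ≤ s) (h1 : s ≤ 1) :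
    2 * min s (1 - s) ≤ Real.sin (Real.pi * s) := by
  have hπ := Real.pi_pos
  have half : ∀ t : ℝ, 0 ≤ t → t ≤ 1/2 → 2 * t ≤ Real.sin (Real.pi * t) := by
    intro t ht ht2
    have := Real.mul_le_sin (x := Real.pi * t) (by positivity) (by nlinarith)
    calc 2 * t = 2 / Real.pi * (Real.pi * t) := by field_simp
    _ ≤ Real.sin (Real.pi * t) := this
  rcases le_total s (1/2) with hs | hs
  · have hmin : min s (1 - s) = s := min_eq_left (by linarith)
    rw [hmin]; exact half s h0 hs
  · have hmin : min s (1 - s) = 1 - s := min_eq_right (by linarith)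
    rw [hmin]
    have := half (1 - s) (by linarith) (by linarith)
    calc 2 * (1 - s) ≤ Real.sin (Real.pi * (1 - s)) := this
    _ = Real.sin (Real.pi * s) := by
        rw [show Real.pi * (1 - s) = Real.pi - Real.pi * s by ring, Real.sin_pi_sub]

lemma my_term_bound (g : ℝ) (hg : 0 < g) {c E₀ M : ℝ} (hc : -1 ≤ c) (hc1 : c ≤ 1)
    (hE₀ : 0 ≤ E₀) (hE₀2 : E₀ ≤ 2) (hM : 0 < M)
    (hMle : M ≤ Real.sqrt ((2 + c) ^ 2 - 1)) :
    (1 / Real.pi) * Real.arctan ((1 / g) * Real.sqrt ((2 + c) ^ 2 - 1))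
      - (1 / Real.pi) * Real.arctan ((1 / g) * Real.sqrt ((E₀ + c) ^ 2 - 1))
      ≤ 6 * (2 - E₀) / (Real.pi * g * M) := by
  have hπ := Real.pi_pos
  set x := (2 + c) ^ 2 - 1 with hxdef
  set y := (E₀ + c) ^ 2 - 1 with hydef
  have hsx : 0 < Real.sqrt x := lt_of_lt_of_le hM hMle
  have hx : 0 < x := Real.sqrt_pos.mp hsx
  have hxy : y ≤ x := by
    have h1 : -(2 + c) ≤ E₀ + c := by linarith
    have h2 : E₀ + c ≤ 2 + c := by linarith
    nlinarith
  have hdiff : x - y ≤ 6 * (2 - E₀) := by nlinarith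
  have harc : Real.arctan ((1 / g) * Real.sqrt x) - Real.arctan ((1 / g) * Real.sqrt y)
      ≤ (1 / g) * ((x - y) / Real.sqrt x) := by
    have hb : (1 / g) * Real.sqrt y ≤ (1 / g) * Real.sqrt x :=
      mul_le_mul_of_nonneg_left (Real.sqrt_le_sqrt hxy) (by positivity)
    have := my_arctan_sub_le hb
    have h2 := my_sqrt_sub_le hx hxy
    calc Real.arctan ((1 / g) * Real.sqrt x) - Real.arctan ((1 / g) * Real.sqrt y)
        ≤ (1 / g) * Real.sqrt x - (1 / g) * Real.sqrt y := this
      _ = (1 / g) * (Real.sqrt x - Real.sqrt y) := by ring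
      _ ≤ (1 / g) * ((x - y) / Real.sqrt x) :=
          mul_le_mul_of_nonneg_left h2 (by positivity)
  have hfin : (1 / g) * ((x - y) / Real.sqrt x) ≤ 6 * (2 - E₀) / (g * M) := by
    have : (x - y) / Real.sqrt x ≤ 6 * (2 - E₀) / M :=
      div_le_div₀ (by linarith) hdiff hM hMle
    calc (1 / g) * ((x - y) / Real.sqrt x) ≤ (1 / g) * (6 * (2 - E₀) / M) :=
          mul_le_mul_of_nonneg_left this (by positivity)
      _ = 6 * (2 - E₀) / (g * M) := by ring
  calc (1 / Real.pi) * Real.arctan ((1 / g) * Real.sqrt x)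
        - (1 / Real.pi) * Real.arctan ((1 / g) * Real.sqrt y)
      = (1 / Real.pi) * (Real.arctan ((1 / g) * Real.sqrt x)
          - Real.arctan ((1 / g) * Real.sqrt y)) := by ring
    _ ≤ (1 / Real.pi) * (6 * (2 - E₀) / (g * M)) :=
        mul_le_mul_of_nonneg_left (harc.trans hfin) (by positivity)
    _ = 6 * (2 - E₀) / (Real.pi * g * M) := by ring

/-- The main per-term estimate, for the terms `l = J ≥ 1`. -/
lemma my_main_term (g : ℝ) (hg : 0 < g) {Q J δ k₂ E₀ : ℝ}
    (hQ2 : 2 ≤ Q) (hJ1 : 1 ≤ J) (hJn : J ≤ Q - 1)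
    (hδ1 : -1 ≤ 2*Q*δ) (hδ2 : 2*Q*δ ≤ 1)
    (hkey : 1 + Real.cos (2*Real.pi*(k₂ + J/Q))
      = 2 * Real.sin (Real.pi*(δ + J/Q)) ^ 2)
    (hE₀0 : 0 ≤ E₀) (hE₀2 : E₀ ≤ 2) (hE₀small : 2 - E₀ ≤ Real.pi^2/(2*Q^2)) :
    (1 / Real.pi) * Real.arctan ((1 / g) *
        Real.sqrt ((2 + Real.cos (2*Real.pi*(k₂ + J/Q))) ^ 2 - 1))
      - (1 / Real.pi) * Real.arctan ((1 / g) *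
        Real.sqrt ((E₀ + Real.cos (2*Real.pi*(k₂ + J/Q))) ^ 2 - 1))
      ≤ (3*Real.pi/(g*Q)) * (1/(2*J-1) + 1/(2*Q-2*J-1)) := by
  have hπ := Real.pi_pos
  have hQpos : (0:ℝ) < Q := by linarith
  set s : ℝ := δ + J/Q with hsdef
  have hqs : 2*Q*s = 2*Q*δ + 2*J := by rw [hsdef]; field_simp
  clear_value s
  have hs_lb : 2*J - 1 ≤ 2*Q*s := by rw [hqs]; linarith
  have hs_ub : 2*Q*s ≤ 2*J + 1 := by rw [hqs]; linarith
  have hseq : s = (2*Q*s)/(2*Q) := by field_simp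
  have hs0 : 0 ≤ s := by
    rw [hseq]; apply div_nonneg (by linarith) (by positivity)
  have hs1 : s ≤ 1 := by
    rw [hseq, div_le_one (by positivity)]; linarith
  set m : ℝ := min (2*J-1) (2*Q-2*J-1) with hmdef
  have hm1 : (1:ℝ) ≤ m := by rw [hmdef]; exact le_min (by linarith) (by linarith)
  clear_value m
  have hM : (0:ℝ) < m/Q := div_pos (by linarith) hQpos
  have hMsin : m/Q ≤ Real.sin (Real.pi * s) := by
    have hsin := my_sin_ge hs0 hs1
    rcases le_total s (1-s) with h | h
    · rw [min_eq_left h] at hsin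
      have h1 : m/Q ≤ 2*s := by
        rw [div_le_iff₀ hQpos]
        have := min_le_left (2*J-1) (2*Q-2*J-1)
        nlinarith
      linarith
    · rw [min_eq_right h] at hsin
      have h1 : m/Q ≤ 2*(1-s) := by
        rw [div_le_iff₀ hQpos]
        have := min_le_right (2*J-1) (2*Q-2*J-1)
        nlinarith
      linarith
  have hsq2 : (m/Q)^2 ≤ (2 + Real.cos (2*Real.pi*(k₂ + J/Q))) ^ 2 - 1 := by
    nlinarith [hMsin, hM.le, hkey, sq_nonneg (Real.sin (Real.pi * s)),
      sq_nonneg (Real.sin (Real.pi * s) ^ 2)]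
  have hMle : m/Q ≤ Real.sqrt ((2 + Real.cos (2*Real.pi*(k₂ + J/Q))) ^ 2 - 1) :=
    Real.le_sqrt_of_sq_le hsq2
  have hc : -1 ≤ Real.cos (2*Real.pi*(k₂ + J/Q)) := Real.neg_one_le_cos _
  have hc1 : Real.cos (2*Real.pi*(k₂ + J/Q)) ≤ 1 := Real.cos_le_one _
  refine le_trans (my_term_bound g hg hc hc1 hE₀0 hE₀2 hM hMle) ?_
  -- pure algebra from here on
  have hm_inv : 1/m ≤ 1/(2*J-1) + 1/(2*Q-2*J-1) := by
    have ha : (0:ℝ) < 2*J-1 := by linarith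
    have hb : (0:ℝ) < 2*Q-2*J-1 := by linarith
    rcases min_cases (2*J-1) (2*Q-2*J-1) with ⟨he, _⟩ | ⟨he, _⟩ <;> rw [hmdef, he]
    · have : (0:ℝ) ≤ 1/(2*Q-2*J-1) := by positivity
      linarith
    · have : (0:ℝ) ≤ 1/(2*J-1) := by positivity
      linarith
  have hπgm : (0:ℝ) < Real.pi*g*m := by
    have : (0:ℝ) < m := by linarith
    positivity
  have e3 : 6*(2-E₀)/(Real.pi*g*(m/Q)) = (6*(2-E₀)*Q)/(Real.pi*g*m) := by
    rw [div_eq_div_iff (by positivity) hπgm.ne']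
    field_simp
  have h5 : 6*(2-E₀)*Q ≤ 3*Real.pi^2/Q := by
    have h51 : 6*(2-E₀)*Q ≤ 6*(Real.pi^2/(2*Q^2))*Q := by
      have := mul_le_mul_of_nonneg_right hE₀small hQpos.le
      linarith
    have h52 : 6*(Real.pi^2/(2*Q^2))*Q = 3*Real.pi^2/Q := by
      field_simp; ring
    linarith
  have e4 : (6*(2-E₀)*Q)/(Real.pi*g*m) ≤ (3*Real.pi^2/Q)/(Real.pi*g*m) := by
    rw [div_le_div_iff₀ hπgm hπgm]
    exact mul_le_mul_of_nonneg_right h5 hπgm.le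
  have e5 : (3*Real.pi^2/Q)/(Real.pi*g*m) = (3*Real.pi/(g*Q))*(1/m) := by
    field_simp
  have e6 : (3*Real.pi/(g*Q))*(1/m)
      ≤ (3*Real.pi/(g*Q))*(1/(2*J-1) + 1/(2*Q-2*J-1)) :=
    mul_le_mul_of_nonneg_left hm_inv (by positivity)
  calc 6*(2-E₀)/(Real.pi*g*(m/Q)) = (6*(2-E₀)*Q)/(Real.pi*g*m) := e3
    _ ≤ (3*Real.pi^2/Q)/(Real.pi*g*m) := e4
    _ = (3*Real.pi/(g*Q))*(1/m) := e5
    _ ≤ (3*Real.pi/(g*Q))*(1/(2*J-1) + 1/(2*Q-2*J-1)) := e6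

/-- The estimate for the term `l = 0`. -/
lemma my_zero_term (g : ℝ) (hg : 0 < g) {Q E₀ c : ℝ}
    (hQ2 : 2 ≤ Q) (hc : -1 ≤ c) (hc1 : c ≤ 1)
    (hE₀ : E₀ = 1 - c) (hE₀small : 2 - E₀ ≤ Real.pi^2/(2*Q^2)) :
    (1 / Real.pi) * Real.arctan ((1 / g) * Real.sqrt ((2 + c) ^ 2 - 1))
      - (1 / Real.pi) * Real.arctan ((1 / g) * Real.sqrt ((E₀ + c) ^ 2 - 1))
      ≤ 2 / (g * Q) := by
  have hπ := Real.pi_pos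
  have hQpos : (0:ℝ) < Q := by linarith
  have hz : (E₀ + c) ^ 2 - 1 = 0 := by rw [hE₀]; ring
  rw [hz, Real.sqrt_zero, mul_zero, Real.arctan_zero, mul_zero, sub_zero]
  have hce : 1 + c = 2 - E₀ := by rw [hE₀]; ring
  have hE₀small0 : (0:ℝ) ≤ 2 - E₀ := by rw [hE₀]; linarith
  have hx4 : (2 + c) ^ 2 - 1 ≤ (2 * Real.pi / Q) ^ 2 := by
    have h1 : (2 + c) ^ 2 - 1 ≤ 4 * (2 - E₀) := by nlinarith
    have h3 : 4 * (2 - E₀) ≤ (2 * Real.pi / Q) ^ 2 := by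
      have e : (2 * Real.pi / Q)^2
          = 4 * (Real.pi^2 / (2*Q^2)) + 2*Real.pi^2/Q^2 := by ring
      have hpos : (0:ℝ) ≤ 2*Real.pi^2/Q^2 := by positivity
      linarith
    linarith
  have hsq : Real.sqrt ((2 + c) ^ 2 - 1) ≤ 2 * Real.pi / Q := by
    calc Real.sqrt ((2 + c) ^ 2 - 1)
        ≤ Real.sqrt ((2 * Real.pi / Q) ^ 2) := Real.sqrt_le_sqrt hx4
      _ = 2 * Real.pi / Q := Real.sqrt_sq (by positivity)
  have harct : Real.arctan ((1/g) * Real.sqrt ((2 + c) ^ 2 - 1))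
      ≤ (1/g) * (2 * Real.pi / Q) := by
    have := my_arctan_sub_le
      (a := (1/g) * Real.sqrt ((2 + c) ^ 2 - 1)) (b := 0) (by positivity)
    rw [Real.arctan_zero] at this
    have hmle : (1/g) * Real.sqrt ((2 + c) ^ 2 - 1) ≤ (1/g) * (2 * Real.pi / Q) :=
      mul_le_mul_of_nonneg_left hsq (by positivity)
    linarith
  calc (1 / Real.pi) * Real.arctan ((1/g) * Real.sqrt ((2 + c) ^ 2 - 1))
      ≤ (1 / Real.pi) * ((1/g) * (2 * Real.pi / Q)) :=
        mul_le_mul_of_nonneg_left harct (by positivity)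
    _ = 2 / (g * Q) := by field_simp

/-- `φ(k,E) = (1/π) arctan((1/g)√((E + cos 2πk)² - 1))`. -/
noncomputable def phi (g : ℝ) (k E : ℝ) : ℝ :=
  (1 / Real.pi) * Real.arctan ((1 / g) * Real.sqrt ((E + Real.cos (2 * Real.pi * k)) ^ 2 - 1))

/-- `Φ_q(k₂,E) = ∑_{l=0}^{q-1} φ(k₂ + l/q, E)`. -/
noncomputable def Phiq (g : ℝ) (q : ℕ) (k₂ E : ℝ) : ℝ :=
  ∑ l ∈ Finset.range q, phi g (k₂ + (l : ℝ) / (q : ℝ)) E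

set_option maxHeartbeats 1000000 in
/-- for large `q` the total phase increment between the band edge
`E = 1 - cos 2πk₂` and `E = 2` is at most `C (log q)/q`, uniformly in
`k₂ ∈ [1/2 - 1/(2q), 1/2 + 1/(2q)]`; hence for large `q` there is at most one
surface energy band below the edge `E = 2`. -/
theorem phase_increment_log_q_over_q (g : ℝ) (hg : 0 < g) :
    ∃ C : ℝ, 0 < C ∧ ∀ q : ℕ, 2 ≤ q →
      ∀ k₂ : ℝ, k₂ ∈ Set.Icc (1/2 - 1/(2*(q:ℝ))) (1/2 + 1/(2*(q:ℝ))) →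
        0 ≤ Phiq g q k₂ 2 - Phiq g q k₂ (1 - Real.cos (2 * Real.pi * k₂)) ∧
        Phiq g q k₂ 2 - Phiq g q k₂ (1 - Real.cos (2 * Real.pi * k₂))
          ≤ C * Real.log q / (q : ℝ) := by
  refine ⟨100 / g, by positivity, ?_⟩
  intro q hq k₂ hk
  obtain ⟨hkl, hkr⟩ := hk
  have hπ := Real.pi_pos
  have hq2 : (2:ℝ) ≤ (q:ℝ) := by exact_mod_cast hq
  have hq0 : (0:ℝ) < q := by linarith
  set E₀ := 1 - Real.cos (2 * Real.pi * k₂) with hE₀def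
  clear_value E₀
  have hcosk : -1 ≤ Real.cos (2 * Real.pi * k₂) := Real.neg_one_le_cos _
  have hcosk1 : Real.cos (2 * Real.pi * k₂) ≤ 1 := Real.cos_le_one _
  have hE₀0 : 0 ≤ E₀ := by rw [hE₀def]; linarith
  have hE₀2 : E₀ ≤ 2 := by rw [hE₀def]; linarith
  set δ := k₂ - 1/2 with hδdef
  clear_value δ
  have hδ1 : -(1/(2*(q:ℝ))) ≤ δ := by rw [hδdef]; linarith
  have hδ2 : δ ≤ 1/(2*(q:ℝ)) := by rw [hδdef]; linarith
  have h2qδ1 : (-1:ℝ) ≤ 2*(q:ℝ)*δ := by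
    have h' : -δ ≤ 1/(2*(q:ℝ)) := by linarith
    have := (le_div_iff₀ (by positivity : (0:ℝ) < 2*(q:ℝ))).mp h'
    nlinarith
  have h2qδ2 : 2*(q:ℝ)*δ ≤ 1 := by
    have := (le_div_iff₀ (by positivity : (0:ℝ) < 2*(q:ℝ))).mp hδ2
    nlinarith
  -- the key trig identity
  have key : ∀ u : ℝ, 1 + Real.cos (2 * Real.pi * (k₂ + u))
      = 2 * Real.sin (Real.pi * (δ + u)) ^ 2 := by
    intro u
    have h1 : Real.cos (2 * Real.pi * (k₂ + u)) = -Real.cos (2 * (Real.pi * (δ + u))) := by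
      rw [show 2 * Real.pi * (k₂ + u) = Real.pi - (-(2 * (Real.pi * (δ + u)))) by
        rw [hδdef]; ring]
      rw [Real.cos_pi_sub, Real.cos_neg]
    rw [h1, Real.sin_sq_eq_half_sub]
    ring
  -- smallness of 2 - E₀
  have hδsq : δ^2 ≤ 1/(2*(q:ℝ))^2 := by
    have := sq_le_sq' hδ1 hδ2
    calc δ^2 ≤ (1/(2*(q:ℝ)))^2 := this
    _ = 1/(2*(q:ℝ))^2 := by rw [div_pow, one_pow]
  have hE₀small : 2 - E₀ ≤ Real.pi^2 / (2*(q:ℝ)^2) := by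
    have h0 : 1 + Real.cos (2 * Real.pi * k₂) = 2 * Real.sin (Real.pi * δ) ^ 2 := by
      have := key 0
      simpa using this
    have hsin := Real.sin_sq_le_sq (x := Real.pi * δ)
    have : 2 - E₀ = 1 + Real.cos (2 * Real.pi * k₂) := by rw [hE₀def]; ring
    rw [this, h0]
    have hps : (Real.pi * δ)^2 = Real.pi^2 * δ^2 := by ring
    have hmul := mul_le_mul_of_nonneg_left hδsq (sq_nonneg Real.pi)
    have hid : Real.pi^2 * (1/(2*(q:ℝ))^2) = Real.pi^2/(2*(q:ℝ)^2) / 2 := by ring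
    linarith
  -- rewrite the difference as a sum
  have hsum : Phiq g q k₂ 2 - Phiq g q k₂ E₀
      = ∑ l ∈ Finset.range q,
        (phi g (k₂ + (l:ℝ)/(q:ℝ)) 2 - phi g (k₂ + (l:ℝ)/(q:ℝ)) E₀) := by
    rw [Phiq, Phiq, Finset.sum_sub_distrib]
  constructor
  · -- nonnegativity
    rw [hsum]
    apply Finset.sum_nonneg
    intro l _
    have hc : -1 ≤ Real.cos (2 * Real.pi * (k₂ + (l:ℝ)/(q:ℝ))) := Real.neg_one_le_cos _
    have hc1 : Real.cos (2 * Real.pi * (k₂ + (l:ℝ)/(q:ℝ))) ≤ 1 := Real.cos_le_one _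
    rw [phi, phi, sub_nonneg]
    apply mul_le_mul_of_nonneg_left _ (by positivity)
    apply Real.arctan_strictMono.monotone
    apply mul_le_mul_of_nonneg_left _ (by positivity)
    apply Real.sqrt_le_sqrt
    nlinarith
  · -- the main estimate
    rw [hsum]
    obtain ⟨n, rfl⟩ : ∃ n, q = n + 1 := ⟨q - 1, by omega⟩
    have hn1 : 1 ≤ n := by omega
    rw [Finset.sum_range_succ']
    have hzero : phi g (k₂ + ((0:ℕ):ℝ)/((n+1:ℕ):ℝ)) 2
        - phi g (k₂ + ((0:ℕ):ℝ)/((n+1:ℕ):ℝ)) E₀ ≤ 2 / (g * ((n+1:ℕ):ℝ)) := by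
      simp only [Nat.cast_zero, zero_div, add_zero]
      rw [phi, phi]
      exact my_zero_term g hg hq2 hcosk hcosk1 hE₀def hE₀small
    have hterm : ∀ l ∈ Finset.range n,
        phi g (k₂ + ((l+1:ℕ):ℝ)/((n+1:ℕ):ℝ)) 2 - phi g (k₂ + ((l+1:ℕ):ℝ)/((n+1:ℕ):ℝ)) E₀
          ≤ (3*Real.pi/(g*((n+1:ℕ):ℝ)))
            * (1/(2*(l:ℝ)+1) + 1/(2*((n+1:ℕ):ℝ)-2*(l:ℝ)-3)) := by
      intro l hl
      have hln : l < n := Finset.mem_range.mp hl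
      have hJ1 : (1:ℝ) ≤ ((l+1:ℕ):ℝ) := by exact_mod_cast Nat.succ_le_succ (Nat.zero_le l)
      have hJn : ((l+1:ℕ):ℝ) ≤ ((n+1:ℕ):ℝ) - 1 := by
        push_cast
        have : (l:ℝ) + 1 ≤ (n:ℝ) := by exact_mod_cast hln
        linarith
      rw [phi, phi]
      refine le_trans (my_main_term g hg hq2 hJ1 hJn h2qδ1 h2qδ2
        (key (((l+1:ℕ):ℝ)/((n+1:ℕ):ℝ))) hE₀0 hE₀2 hE₀small) (le_of_eq ?_)
      have e1 : 2*((l+1:ℕ):ℝ)-1 = 2*(l:ℝ)+1 := by push_cast; ring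
      have e2 : 2*((n+1:ℕ):ℝ)-2*((l+1:ℕ):ℝ)-1 = 2*((n+1:ℕ):ℝ)-2*(l:ℝ)-3 := by
        push_cast; ring
      rw [e1, e2]
    refine le_trans (add_le_add (Finset.sum_le_sum hterm) hzero) ?_
    set Q : ℝ := ((n+1:ℕ):ℝ) with hQdef
    set L : ℝ := Real.log Q with hLdef
    have hQpos : (0:ℝ) < Q := hq0
    have hS2 : ∑ l ∈ Finset.range n, (1:ℝ)/(2*Q-2*(l:ℝ)-3)
        = ∑ l ∈ Finset.range n, (1:ℝ)/(2*(l:ℝ)+1) := by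
      rw [← Finset.sum_range_reflect (fun j => (1:ℝ)/(2*(j:ℝ)+1)) n]
      refine Finset.sum_congr rfl fun l hl => ?_
      have hln : l < n := Finset.mem_range.mp hl
      have hcast : ((n - 1 - l : ℕ) : ℝ) = (n:ℝ) - 1 - (l:ℝ) := by
        rw [show n - 1 - l = n - (1 + l) from by omega, Nat.cast_sub (by omega)]
        push_cast; ring
      show (1:ℝ)/(2*Q-2*(l:ℝ)-3) = 1/(2*((n-1-l:ℕ):ℝ)+1)
      rw [hcast, hQdef]
      push_cast
      congr 1
      ring
    have hS1 : ∑ l ∈ Finset.range n, (1:ℝ)/(2*(l:ℝ)+1) ≤ 1 + L := by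
      have h1 : ∑ l ∈ Finset.range n, (1:ℝ)/(2*(l:ℝ)+1)
          ≤ ∑ l ∈ Finset.range n, (1:ℝ)/((l:ℝ)+1) := by
        apply Finset.sum_le_sum
        intro l _
        apply one_div_le_one_div_of_le (by positivity)
        have : (0:ℝ) ≤ (l:ℝ) := Nat.cast_nonneg l
        linarith
      have h2 : (harmonic n : ℝ) = ∑ l ∈ Finset.range n, (1:ℝ)/((l:ℝ)+1) := by
        rw [harmonic]
        push_cast
        simp [one_div]
      have h3 : (harmonic n : ℝ) ≤ 1 + Real.log n := harmonic_le_one_add_log n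
      have h4 : Real.log (n:ℝ) ≤ L := by
        rw [hLdef, hQdef]
        apply Real.log_le_log (by exact_mod_cast hn1)
        push_cast; linarith
      linarith
    have hgQ : (0:ℝ) < g * Q := by positivity
    have hL069 : (0.69:ℝ) ≤ L := by
      have h1 : Real.log 2 ≤ L := by
        rw [hLdef]
        exact Real.log_le_log (by norm_num) hq2
      have := Real.log_two_gt_d9
      linarith
    calc (∑ l ∈ Finset.range n,
          (3*Real.pi/(g*Q)) * (1/(2*(l:ℝ)+1) + 1/(2*Q-2*(l:ℝ)-3))) + 2/(g*Q)
        = (3*Real.pi/(g*Q)) * ((∑ l ∈ Finset.range n, (1:ℝ)/(2*(l:ℝ)+1))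
            + ∑ l ∈ Finset.range n, (1:ℝ)/(2*Q-2*(l:ℝ)-3)) + 2/(g*Q) := by
          rw [← Finset.mul_sum, Finset.sum_add_distrib]
      _ ≤ (3*Real.pi/(g*Q)) * ((1+L) + (1+L)) + 2/(g*Q) := by
          have h6 : (∑ l ∈ Finset.range n, (1:ℝ)/(2*(l:ℝ)+1))
              + ∑ l ∈ Finset.range n, (1:ℝ)/(2*Q-2*(l:ℝ)-3) ≤ (1+L) + (1+L) := by
            rw [hS2]; linarith
          exact add_le_add (mul_le_mul_of_nonneg_left h6 (by positivity)) le_rfl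
      _ ≤ 100 / g * L / Q := by
          have e1 : (3*Real.pi/(g*Q)) * ((1+L) + (1+L)) + 2/(g*Q)
              = (6*Real.pi*(1+L) + 2)/(g*Q) := by field_simp; ring
          have e2 : 100 / g * L / Q = (100*L)/(g*Q) := by field_simp
          rw [e1, e2, div_le_div_iff₀ hgQ hgQ]
          have hπ4 : Real.pi ≤ 4 := Real.pi_le_four
          have h7 : 6*Real.pi*L ≤ 24*L := by nlinarith
          nlinarith [hgQ]
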